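/- arXiv:1610.02611 — 4 statements merged into one kernel-verified Lean document; each statement's English description precedes it below -/
import Mathlib

section
/- Fix a natural number m. For each n > m, the expected number of zeros of the naive-model random harmonic polynomial, given by E N_n = (1/π) ∫_ℂ (1/|z|²) · (r₁² + r₂² − 2 r₁₂²) / (r₃² √((r₁ + r₂)² − 4 r₁₂²)) dσ(z), satisfies lim_{n→∞} E N_n / n = 1. -/
open Finset MeasureTheory Filter Real

/-- `aP k s = ∑_{j=0}^k s^j` -/
noncomputable def aP (k : ℕ) (s : ℝ) : ℝ := ∑ j ∈ range (k + 1), s ^ j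

/-- `bP k s = ∑_{j=1}^k j s^j` -/
noncomputable def bP (k : ℕ) (s : ℝ) : ℝ := ∑ j ∈ range (k + 1), (j : ℝ) * s ^ j

/-- `cP k s = ∑_{j=1}^k j² s^j` -/
noncomputable def cP (k : ℕ) (s : ℝ) : ℝ := ∑ j ∈ range (k + 1), (j : ℝ) ^ 2 * s ^ j

/-- The Li–Wei expected number of zeros of the naive-model random harmonic
polynomial of degrees `n`, `m`:
`E N = (1/π) ∫_ℂ (1/|z|²) (r₁² + r₂² − 2r₁₂²) / (r₃² √((r₁+r₂)² − 4r₁₂²)) dσ(z)`. -/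
noncomputable def expectedZeros (n m : ℕ) : ℝ :=
  (1 / π) * ∫ z : ℂ,
    let s : ℝ := ‖z‖ ^ 2
    let r₃ : ℝ := aP n s + aP m s
    let r₁ : ℝ := r₃ * cP n s - bP n s ^ 2
    let r₂ : ℝ := r₃ * cP m s - bP m s ^ 2
    let r₁₂ : ℝ := bP n s * bP m s
    (1 / s) * ((r₁ ^ 2 + r₂ ^ 2 - 2 * r₁₂ ^ 2) /
      (r₃ ^ 2 * Real.sqrt ((r₁ + r₂) ^ 2 - 4 * r₁₂ ^ 2)))

open scoped Topology

section basic
variable (k : ℕ) {s : ℝ}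

lemma aP_nonneg (hs : 0 ≤ s) : 0 ≤ aP k s :=
  Finset.sum_nonneg fun j _ => pow_nonneg hs j

lemma one_le_aP (hs : 0 ≤ s) : 1 ≤ aP k s := by
  have h := Finset.single_le_sum (f := fun j => s ^ j) (fun j _ => pow_nonneg hs j)
    (Finset.mem_range.2 (Nat.succ_pos k))
  simpa [aP] using h

lemma pow_le_aP (hs : 0 ≤ s) : s ^ k ≤ aP k s := by
  rw [aP]
  exact Finset.single_le_sum (fun j _ => pow_nonneg hs j) (Finset.self_mem_range_succ k)

lemma bP_nonneg (hs : 0 ≤ s) : 0 ≤ bP k s :=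
  Finset.sum_nonneg fun j _ => mul_nonneg (Nat.cast_nonneg j) (pow_nonneg hs j)

lemma cP_nonneg (hs : 0 ≤ s) : 0 ≤ cP k s :=
  Finset.sum_nonneg fun j _ => mul_nonneg (sq_nonneg _) (pow_nonneg hs j)

lemma bP_le_aP_mul (hs : 0 ≤ s) : bP k s ≤ k * aP k s := by
  rw [bP, aP, Finset.mul_sum]
  refine Finset.sum_le_sum fun j hj => ?_
  exact mul_le_mul_of_nonneg_right
    (by exact_mod_cast Nat.cast_le.2 (Nat.lt_succ_iff.1 (Finset.mem_range.1 hj)))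
    (pow_nonneg hs j)

lemma sq_bP_le (hs : 0 ≤ s) : bP k s ^ 2 ≤ aP k s * cP k s := by
  rw [bP, aP, cP]
  refine Finset.sum_sq_le_sum_mul_sum_of_sq_eq_mul _ (fun j _ => pow_nonneg hs j)
    (fun j _ => mul_nonneg (sq_nonneg _) (pow_nonneg hs j)) (fun j _ => by ring)

lemma bP_le_of_le_one (hs : 0 ≤ s) (h1 : s ≤ 1) : bP k s ≤ (k+1) ^ 2 * s := by
  rw [bP]
  calc ∑ j ∈ range (k+1), (j:ℝ) * s ^ j ≤ ∑ j ∈ range (k+1), (k:ℝ) * s := by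
        refine Finset.sum_le_sum fun j hj => ?_
        rcases Nat.eq_zero_or_pos j with rfl | hj0
        · simp [mul_nonneg (Nat.cast_nonneg k) hs]
        · have h2 : s ^ j ≤ s := by
            calc s ^ j ≤ s ^ 1 := pow_le_pow_of_le_one hs h1 hj0
            _ = s := pow_one s
          have hjk : (j:ℝ) ≤ k := by
            exact_mod_cast Nat.lt_succ_iff.1 (Finset.mem_range.1 hj)
          exact mul_le_mul hjk h2 (pow_nonneg hs j) (Nat.cast_nonneg k)
    _ = ((k:ℝ)+1) * ((k:ℝ) * s) := by rw [Finset.sum_const, Finset.card_range]; push_cast; ring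
    _ ≤ ((k:ℝ)+1)^2 * s := by nlinarith [Nat.cast_nonneg (α := ℝ) k, hs]

lemma cP_le_of_le_one (hs : 0 ≤ s) (h1 : s ≤ 1) : cP k s ≤ (k+1) ^ 3 * s := by
  rw [cP]
  calc ∑ j ∈ range (k+1), (j:ℝ)^2 * s ^ j ≤ ∑ j ∈ range (k+1), ((k:ℝ)^2) * s := by
        refine Finset.sum_le_sum fun j hj => ?_
        rcases Nat.eq_zero_or_pos j with rfl | hj0
        · simp [mul_nonneg (sq_nonneg (k:ℝ)) hs]
        · have h2 : s ^ j ≤ s := by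
            calc s ^ j ≤ s ^ 1 := pow_le_pow_of_le_one hs h1 hj0
            _ = s := pow_one s
          have hjk : (j:ℝ) ≤ k := by
            exact_mod_cast Nat.lt_succ_iff.1 (Finset.mem_range.1 hj)
          exact mul_le_mul (by nlinarith [Nat.cast_nonneg (α := ℝ) j]) h2 (pow_nonneg hs j) (sq_nonneg _)
    _ = ((k:ℝ)+1) * ((k:ℝ)^2 * s) := by rw [Finset.sum_const, Finset.card_range]; push_cast; ring
    _ ≤ ((k:ℝ)+1)^3 * s := by nlinarith [Nat.cast_nonneg (α := ℝ) k, hs, sq_nonneg (k:ℝ)]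

lemma bP_le_of_one_le (h1 : 1 ≤ s) : bP k s ≤ (k+1) ^ 2 * s ^ k := by
  have hs : (0:ℝ) ≤ s := le_trans zero_le_one h1
  rw [bP]
  calc ∑ j ∈ range (k+1), (j:ℝ) * s ^ j ≤ ∑ j ∈ range (k+1), (k:ℝ) * s ^ k := by
        refine Finset.sum_le_sum fun j hj => ?_
        have hjk : j ≤ k := Nat.lt_succ_iff.1 (Finset.mem_range.1 hj)
        exact mul_le_mul (by exact_mod_cast hjk) (pow_le_pow_right₀ h1 hjk)
          (pow_nonneg hs j) (Nat.cast_nonneg k)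
    _ = ((k:ℝ)+1) * ((k:ℝ) * s ^ k) := by rw [Finset.sum_const, Finset.card_range]; push_cast; ring
    _ ≤ ((k:ℝ)+1)^2 * s ^ k := by nlinarith [Nat.cast_nonneg (α := ℝ) k, pow_nonneg hs k]

lemma cP_le_of_one_le (h1 : 1 ≤ s) : cP k s ≤ (k+1) ^ 3 * s ^ k := by
  have hs : (0:ℝ) ≤ s := le_trans zero_le_one h1
  rw [cP]
  calc ∑ j ∈ range (k+1), (j:ℝ)^2 * s ^ j ≤ ∑ j ∈ range (k+1), ((k:ℝ)^2) * s ^ k := by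
        refine Finset.sum_le_sum fun j hj => ?_
        have hjk : j ≤ k := Nat.lt_succ_iff.1 (Finset.mem_range.1 hj)
        have : (j:ℝ)^2 ≤ (k:ℝ)^2 := by
          have : (j:ℝ) ≤ k := by exact_mod_cast hjk
          nlinarith [Nat.cast_nonneg (α := ℝ) j]
        exact mul_le_mul this (pow_le_pow_right₀ h1 hjk) (pow_nonneg hs j) (sq_nonneg _)
    _ = ((k:ℝ)+1) * ((k:ℝ)^2 * s ^ k) := by rw [Finset.sum_const, Finset.card_range]; push_cast; ring
    _ ≤ ((k:ℝ)+1)^3 * s ^ k := by nlinarith [Nat.cast_nonneg (α := ℝ) k, pow_nonneg hs k, sq_nonneg (k:ℝ)]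

lemma aP_le_of_one_le (h1 : 1 ≤ s) : aP k s ≤ (k+1) * s ^ k := by
  have hs : (0:ℝ) ≤ s := le_trans zero_le_one h1
  rw [aP]
  calc ∑ j ∈ range (k+1), s ^ j ≤ ∑ j ∈ range (k+1), s ^ k :=
        Finset.sum_le_sum fun j hj => pow_le_pow_right₀ h1 (Nat.lt_succ_iff.1 (Finset.mem_range.1 hj))
    _ = ((k:ℝ)+1) * s ^ k := by rw [Finset.sum_const, Finset.card_range]; push_cast; ring

-- bP k s ≤ (aP k s)^2, via reindexing
lemma bP_le_sq_aP (hs : 0 ≤ s) : bP k s ≤ aP k s ^ 2 := by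
  have h1 : bP k s = ∑ p ∈ (range (k+1)).sigma (fun j => range j), s ^ p.1 := by
    rw [bP, Finset.sum_sigma]
    refine Finset.sum_congr rfl fun j _ => ?_
    simp [Finset.sum_const, Finset.card_range, nsmul_eq_mul]
  have h2 : aP k s ^ 2 = ∑ p ∈ range (k+1) ×ˢ range (k+1), s ^ (p.1 + p.2) := by
    rw [sq, aP, Finset.sum_mul_sum, Finset.sum_product]
    exact Finset.sum_congr rfl fun i _ => Finset.sum_congr rfl fun j _ => (pow_add s i j).symm
  rw [h1, h2]
  have hinj : Set.InjOn (fun p : (Σ _ : ℕ, ℕ) => (p.2, p.1 - p.2))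
      ((range (k+1)).sigma (fun j => range j)) := by
    intro p hp q hq hpq
    simp only [Finset.mem_coe, Finset.mem_sigma, Finset.mem_range] at hp hq
    have ha := congrArg Prod.fst hpq
    have hb := congrArg Prod.snd hpq
    simp only at ha hb
    have : p.1 = q.1 := by omega
    exact Sigma.ext this (heq_of_eq (by omega))
  calc ∑ p ∈ (range (k+1)).sigma (fun j => range j), s ^ p.1
      = ∑ q ∈ ((range (k+1)).sigma (fun j => range j)).image
          (fun p : (Σ _ : ℕ, ℕ) => (p.2, p.1 - p.2)), s ^ (q.1 + q.2) := by
        rw [Finset.sum_image hinj]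
        refine Finset.sum_congr rfl fun p hp => ?_
        simp only [Finset.mem_sigma, Finset.mem_range] at hp
        congr 1
        omega
    _ ≤ ∑ q ∈ range (k+1) ×ˢ range (k+1), s ^ (q.1 + q.2) := by
        refine Finset.sum_le_sum_of_subset_of_nonneg ?_ (fun q _ _ => pow_nonneg hs _)
        intro q hq
        simp only [Finset.mem_image] at hq
        obtain ⟨p, hp, rfl⟩ := hq
        simp only [Finset.mem_sigma, Finset.mem_range] at hp
        simp only [Finset.mem_product, Finset.mem_range]
        omega


noncomputable def dA (k : ℕ) (s : ℝ) : ℝ := ∑ j ∈ range (k + 1), (j : ℝ) * s ^ (j - 1)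
noncomputable def dB (k : ℕ) (s : ℝ) : ℝ := ∑ j ∈ range (k + 1), (j : ℝ) * ((j : ℝ) * s ^ (j - 1))

lemma hasDerivAt_aP (k : ℕ) (s : ℝ) : HasDerivAt (aP k) (dA k s) s := by
  have : HasDerivAt (fun x : ℝ => ∑ j ∈ range (k+1), x ^ j)
      (∑ j ∈ range (k+1), (j : ℝ) * s ^ (j - 1)) s :=
    HasDerivAt.fun_sum fun j _ => hasDerivAt_pow j s
  exact this

lemma hasDerivAt_bP (k : ℕ) (s : ℝ) : HasDerivAt (bP k) (dB k s) s := by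
  have : HasDerivAt (fun x : ℝ => ∑ j ∈ range (k+1), (j:ℝ) * x ^ j)
      (∑ j ∈ range (k+1), (j : ℝ) * ((j:ℝ) * s ^ (j - 1))) s :=
    HasDerivAt.fun_sum fun j _ => (hasDerivAt_pow j s).const_mul _
  exact this

lemma mul_dA (k : ℕ) (s : ℝ) : s * dA k s = bP k s := by
  rw [dA, bP, Finset.mul_sum]
  refine Finset.sum_congr rfl fun j _ => ?_
  rcases j with _ | j
  · simp
  · simp only [Nat.add_sub_cancel]
    rw [pow_succ]
    ring

lemma mul_dB (k : ℕ) (s : ℝ) : s * dB k s = cP k s := by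
  rw [dB, cP, Finset.mul_sum]
  refine Finset.sum_congr rfl fun j _ => ?_
  rcases j with _ | j
  · simp
  · simp only [Nat.add_sub_cancel]
    rw [pow_succ]
    ring

noncomputable def denP (n m : ℕ) (s : ℝ) : ℝ := aP n s + aP m s
noncomputable def numP (n m : ℕ) (s : ℝ) : ℝ := bP n s + bP m s
noncomputable def uP (n m : ℕ) (s : ℝ) : ℝ :=
  denP n m s * (cP n s + cP m s) - numP n m s ^ 2
noncomputable def gF (n m : ℕ) (y : ℝ) : ℝ := numP n m (y^2) / denP n m (y^2)
noncomputable def gd (n m : ℕ) (y : ℝ) : ℝ := 2 / y * (uP n m (y^2) / denP n m (y^2) ^ 2)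

section props
variable (n m : ℕ) {s y : ℝ}

lemma one_le_denP (hs : 0 ≤ s) : 1 ≤ denP n m s := by
  have h1 := one_le_aP n hs
  have h2 := aP_nonneg m hs
  rw [denP]; linarith

lemma denP_pos (hs : 0 ≤ s) : 0 < denP n m s :=
  lt_of_lt_of_le one_pos (one_le_denP n m hs)

lemma hasDerivAt_gF (hy : 0 < y) : HasDerivAt (gF n m) (gd n m y) y := by
  have hs : (0:ℝ) ≤ y^2 := sq_nonneg y
  have hsq : HasDerivAt (fun y : ℝ => y^2) (2*y) y := by
    simpa using hasDerivAt_pow 2 y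
  have hnum : HasDerivAt (fun y : ℝ => numP n m (y^2)) ((dB n (y^2) + dB m (y^2)) * (2*y)) y := by
    have h : HasDerivAt (numP n m) (dB n (y^2) + dB m (y^2)) (y^2) :=
      (hasDerivAt_bP n _).add (hasDerivAt_bP m _)
    have := HasDerivAt.comp (h₂ := numP n m) (h := fun y : ℝ => y ^ 2) y h hsq
    simpa [Function.comp_def] using this
  have hden : HasDerivAt (fun y : ℝ => denP n m (y^2)) ((dA n (y^2) + dA m (y^2)) * (2*y)) y := by
    have h : HasDerivAt (denP n m) (dA n (y^2) + dA m (y^2)) (y^2) :=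
      (hasDerivAt_aP n _).add (hasDerivAt_aP m _)
    have := HasDerivAt.comp (h₂ := denP n m) (h := fun y : ℝ => y ^ 2) y h hsq
    simpa [Function.comp_def] using this
  have hne : denP n m (y^2) ≠ 0 := ne_of_gt (denP_pos n m hs)
  have hdiv := hnum.fun_div hden hne
  refine hdiv.congr_deriv (Eq.symm ?_)
  have hP : y^2 * (dB n (y^2) + dB m (y^2)) = cP n (y^2) + cP m (y^2) := by
    rw [mul_add, mul_dB, mul_dB]
  have hQ : y^2 * (dA n (y^2) + dA m (y^2)) = numP n m (y^2) := by
    rw [mul_add, mul_dA, mul_dA, numP]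
  rw [gd, uP]
  field_simp
  linear_combination (-denP n m (y^2)) * hP + numP n m (y^2) * hQ

end props

section main
variable (n m : ℕ) {s y : ℝ}

noncomputable def r1P (n m : ℕ) (s : ℝ) : ℝ := denP n m s * cP n s - bP n s ^ 2
noncomputable def r2P (n m : ℕ) (s : ℝ) : ℝ := denP n m s * cP m s - bP m s ^ 2
noncomputable def r12P (n m : ℕ) (s : ℝ) : ℝ := bP n s * bP m s

lemma uP_nonneg (hs : 0 ≤ s) : 0 ≤ uP n m s := by
  have h1 := sq_bP_le n hs
  have h2 := sq_bP_le m hs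
  have hA := aP_nonneg n hs
  have hC := cP_nonneg n hs
  have hα := aP_nonneg m hs
  have hγ := cP_nonneg m hs
  have hB := bP_nonneg n hs
  have hβ := bP_nonneg m hs
  have h5 : (bP n s)^2 * (bP m s)^2 ≤ (aP n s * cP n s) * (aP m s * cP m s) :=
    mul_le_mul h1 h2 (sq_nonneg _) (mul_nonneg hA hC)
  have h4 : (2*(bP n s * bP m s))^2 ≤ (aP n s * cP m s + aP m s * cP n s)^2 := by
    nlinarith [h5, sq_nonneg (aP n s * cP m s - aP m s * cP n s)]
  have h6 : (0:ℝ) ≤ 2*(bP n s * bP m s) := by positivity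
  have h7 : (0:ℝ) ≤ aP n s * cP m s + aP m s * cP n s := by positivity
  have key : 2*(bP n s * bP m s) ≤ aP n s * cP m s + aP m s * cP n s := by
    nlinarith [h4, h6, h7]
  rw [uP, denP, numP]
  nlinarith [h1, h2, key]

lemma aPm_cPn_le_r1P (hs : 0 ≤ s) : aP m s * cP n s ≤ r1P n m s := by
  rw [r1P, denP]
  nlinarith [sq_bP_le n hs]

lemma aPn_cPm_le_r2P (hs : 0 ≤ s) : aP n s * cP m s ≤ r2P n m s := by
  rw [r2P, denP]
  nlinarith [sq_bP_le m hs]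

lemma r1P_nonneg (hs : 0 ≤ s) : 0 ≤ r1P n m s :=
  le_trans (mul_nonneg (aP_nonneg m hs) (cP_nonneg n hs)) (aPm_cPn_le_r1P n m hs)

lemma r2P_nonneg (hs : 0 ≤ s) : 0 ≤ r2P n m s :=
  le_trans (mul_nonneg (aP_nonneg n hs) (cP_nonneg m hs)) (aPn_cPm_le_r2P n m hs)

lemma r12P_nonneg (hs : 0 ≤ s) : 0 ≤ r12P n m s :=
  mul_nonneg (bP_nonneg n hs) (bP_nonneg m hs)

lemma sq_r12P_le (hs : 0 ≤ s) : r12P n m s ^ 2 ≤ r1P n m s * r2P n m s := by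
  have e1 := aPm_cPn_le_r1P n m hs
  have e2 := aPn_cPm_le_r2P n m hs
  have h1 := sq_bP_le n hs
  have h2 := sq_bP_le m hs
  have base : r12P n m s ^ 2 ≤ (aP m s * cP n s) * (aP n s * cP m s) := by
    rw [r12P]
    nlinarith [mul_le_mul h1 h2 (sq_nonneg _) (mul_nonneg (aP_nonneg n hs) (cP_nonneg n hs))]
  refine le_trans base (mul_le_mul e1 e2 (mul_nonneg (aP_nonneg n hs) (cP_nonneg m hs))
    (r1P_nonneg n m hs))

lemma bP_zero (k : ℕ) : bP k 0 = 0 := by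
  rw [bP]
  refine Finset.sum_eq_zero fun j hj => ?_
  rcases j with _ | j
  · simp
  · simp [zero_pow]

lemma continuous_aP (k : ℕ) : Continuous (aP k) :=
  continuous_finset_sum _ fun j _ => continuous_pow j

lemma continuous_bP (k : ℕ) : Continuous (bP k) :=
  continuous_finset_sum _ fun j _ => continuous_const.mul (continuous_pow j)

lemma continuous_cP (k : ℕ) : Continuous (cP k) :=
  continuous_finset_sum _ fun j _ => continuous_const.mul (continuous_pow j)

lemma continuous_gF : Continuous (gF n m) := by
  refine Continuous.div ?_ ?_ (fun y => ne_of_gt (denP_pos n m (sq_nonneg y)))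
  · exact ((continuous_bP n).add (continuous_bP m)).comp (continuous_pow 2)
  · exact ((continuous_aP n).add (continuous_aP m)).comp (continuous_pow 2)

-- quantitative bound for the limit
lemma gF_near (hmn : m < n) (hy : 1 ≤ y) :
    |gF n m y - n| ≤ 2*(n+1)*(n+1) / y^2 := by
  have hn1 : 1 ≤ n := Nat.one_le_iff_ne_zero.2 (by omega)
  have hs : (1:ℝ) ≤ y^2 := one_le_pow₀ hy
  have hs0 : (0:ℝ) ≤ y^2 := le_trans zero_le_one hs
  set s := y^2 with hsdef
  have hup : ∀ k : ℕ, k ≤ n → (n:ℝ) * aP k s - bP k s ≤ (n+1)*(n+1)*s^(n-1) := by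
    intro k hk
    have : (n:ℝ) * aP k s - bP k s = ∑ j ∈ range (k+1), ((n:ℝ) - j) * s ^ j := by
      rw [aP, bP, Finset.mul_sum, ← Finset.sum_sub_distrib]
      exact Finset.sum_congr rfl fun j _ => by ring
    rw [this]
    calc ∑ j ∈ range (k+1), ((n:ℝ) - j) * s ^ j
        ≤ ∑ j ∈ range (k+1), (n:ℝ) * s^(n-1) := by
          refine Finset.sum_le_sum fun j hj => ?_
          have hjk : j ≤ k := Nat.lt_succ_iff.1 (Finset.mem_range.1 hj)
          have hj' : (0:ℝ) ≤ (n:ℝ) - j + 0 := by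
            have : (j:ℝ) ≤ n := by exact_mod_cast le_trans hjk hk
            linarith
          rcases Nat.eq_or_lt_of_le (le_trans hjk hk) with rfl | hlt
          · -- j = n : term is 0
            simp only [sub_self, zero_mul]
            positivity
          · have hsj : s ^ j ≤ s ^ (n-1) := pow_le_pow_right₀ hs (by omega)
            have h1 : ((n:ℝ) - j) * s ^ j ≤ (n:ℝ) * s ^ j := by
              have : (0:ℝ) ≤ (j:ℝ) := Nat.cast_nonneg j
              have := pow_nonneg hs0 j
              nlinarith
            calc ((n:ℝ) - j) * s ^ j ≤ (n:ℝ) * s ^ j := h1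
              _ ≤ (n:ℝ) * s ^ (n-1) := by
                  exact mul_le_mul_of_nonneg_left hsj (Nat.cast_nonneg n)
      _ = ((k:ℝ)+1) * ((n:ℝ) * s^(n-1)) := by
          rw [Finset.sum_const, Finset.card_range]; push_cast; ring
      _ ≤ ((n:ℝ)+1) * (((n:ℝ)+1) * s^(n-1)) := by
          have hk' : (k:ℝ) + 1 ≤ (n:ℝ) + 1 := by exact_mod_cast Nat.succ_le_succ hk
          have hsp : (0:ℝ) ≤ s^(n-1) := pow_nonneg hs0 _
          have hn0 : (0:ℝ) ≤ (n:ℝ) := Nat.cast_nonneg n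
          gcongr
          linarith
      _ = (n+1)*(n+1)*s^(n-1) := by ring
  have hlow : ∀ k : ℕ, k ≤ n → (0:ℝ) ≤ (n:ℝ) * aP k s - bP k s := by
    intro k hk
    have h := bP_le_aP_mul k hs0
    have h2 : (k:ℝ) * aP k s ≤ (n:ℝ) * aP k s := by
      have hkn : (k:ℝ) ≤ (n:ℝ) := by exact_mod_cast hk
      nlinarith [aP_nonneg k hs0]
    linarith
  have habs : |numP n m s - n * denP n m s| ≤ 2*(n+1)*(n+1)*s^(n-1) := by
    rw [numP, denP, abs_le]
    constructor
    · have e1 := hup n le_rfl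
      have e2 := hup m (le_of_lt hmn)
      linarith
    · have e1 := hlow n le_rfl
      have e2 := hlow m (le_of_lt hmn)
      have e3 : (0:ℝ) ≤ s^(n-1) := pow_nonneg hs0 _
      have e5 : (0:ℝ) ≤ 2*((n:ℝ)+1)*((n:ℝ)+1)*s^(n-1) := by positivity
      linarith
  have hden : s ^ n ≤ denP n m s := le_trans (pow_le_aP n hs0) (by rw [denP]; nlinarith [aP_nonneg m hs0])
  have hdpos : (0:ℝ) < denP n m s := denP_pos n m hs0
  have e : gF n m y - n = (numP n m s - n * denP n m s) / denP n m s := by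
    rw [gF, ← hsdef]
    field_simp
  rw [e, abs_div, abs_of_pos hdpos]
  have hsn : (0:ℝ) < s ^ n := lt_of_lt_of_le one_pos (one_le_pow₀ hs)
  calc |numP n m s - n * denP n m s| / denP n m s
      ≤ (2*(n+1)*(n+1)*s^(n-1)) / s^n :=
        div_le_div₀ (by positivity) habs hsn hden
    _ = 2*((n:ℝ)+1)*((n:ℝ)+1) / s := by
        have hpow : s ^ n = s^(n-1) * s := by
          conv_lhs => rw [show n = (n-1)+1 by omega]
          rw [pow_succ]
        have hsne : s ≠ 0 := by positivity
        have hpne : s^(n-1) ≠ 0 := by positivity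
        rw [hpow]
        field_simp
    _ = 2*((n:ℝ)+1)*((n:ℝ)+1) / y^2 := by rw [hsdef]

lemma tendsto_gF (hmn : m < n) : Tendsto (gF n m) atTop (𝓝 (n:ℝ)) := by
  have hK : Tendsto (fun y : ℝ => 2*((n:ℝ)+1)*((n:ℝ)+1)/y^2) atTop (𝓝 0) := by
    have h1 : Tendsto (fun y : ℝ => y^2) atTop atTop := tendsto_pow_atTop (by norm_num)
    have h2 : Tendsto (fun y : ℝ => (y^2)⁻¹) atTop (𝓝 0) := h1.inv_tendsto_atTop
    have := h2.const_mul (2*((n:ℝ)+1)*((n:ℝ)+1))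
    simpa [div_eq_mul_inv] using this
  have hlow : Tendsto (fun y : ℝ => (n:ℝ) - 2*((n:ℝ)+1)*((n:ℝ)+1)/y^2) atTop (𝓝 (n:ℝ)) := by
    simpa using (tendsto_const_nhds (x := (n:ℝ))).sub hK
  have hupp : Tendsto (fun y : ℝ => (n:ℝ) + 2*((n:ℝ)+1)*((n:ℝ)+1)/y^2) atTop (𝓝 (n:ℝ)) := by
    simpa using (tendsto_const_nhds (x := (n:ℝ))).add hK
  refine tendsto_of_tendsto_of_tendsto_of_le_of_le' hlow hupp ?_ ?_
  · filter_upwards [eventually_ge_atTop (1:ℝ)] with y hy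
    have := gF_near n m hmn hy
    rw [abs_le] at this
    push_cast at this ⊢
    linarith [this.1]
  · filter_upwards [eventually_ge_atTop (1:ℝ)] with y hy
    have := gF_near n m hmn hy
    rw [abs_le] at this
    push_cast at this ⊢
    linarith [this.2]

lemma gd_nonneg : ∀ y ∈ Set.Ioi (0:ℝ), 0 ≤ gd n m y := by
  intro y hy
  have hy' : (0:ℝ) < y := hy
  have h1 := uP_nonneg n m (sq_nonneg y)
  have h2 : (0:ℝ) < denP n m (y^2)^2 := pow_pos (denP_pos n m (sq_nonneg y)) 2
  rw [gd]
  positivity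

lemma integrableOn_gd (hmn : m < n) : IntegrableOn (gd n m) (Set.Ioi (0:ℝ)) :=
  integrableOn_Ioi_deriv_of_nonneg ((continuous_gF n m).continuousWithinAt)
    (fun y hy => hasDerivAt_gF n m hy) (gd_nonneg n m) (tendsto_gF n m hmn)

lemma integral_gd (hmn : m < n) : ∫ y in Set.Ioi (0:ℝ), gd n m y = n := by
  have h := integral_Ioi_of_hasDerivAt_of_nonneg ((continuous_gF n m).continuousWithinAt)
    (fun y hy => hasDerivAt_gF n m hy) (gd_nonneg n m) (tendsto_gF n m hmn)
  rw [h]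
  have : gF n m 0 = 0 := by
    rw [gF, numP]
    norm_num [bP_zero]
  rw [this, sub_zero]

end main

section sandwich

lemma sandwich_abs (r1 r2 r12 : ℝ) (h1 : 0 ≤ r1) (h2 : 0 ≤ r2) (h12 : 0 ≤ r12)
    (hcs : r12^2 ≤ r1*r2) :
    |(r1^2+r2^2-2*r12^2)/Real.sqrt ((r1+r2)^2 - 4*r12^2) - (r1+r2-2*r12)| ≤ 2*r12 + 4*r2 := by
  set D := Real.sqrt ((r1+r2)^2 - 4*r12^2) with hD
  have harg : 0 ≤ (r1+r2)^2 - 4*r12^2 := by nlinarith [sq_nonneg (r1-r2)]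
  have hD0 : 0 ≤ D := Real.sqrt_nonneg _
  have hD2 : D^2 = (r1+r2)^2 - 4*r12^2 := Real.sq_sqrt harg
  have hDle : D ≤ r1 + r2 := by
    rw [hD]
    calc Real.sqrt ((r1+r2)^2 - 4*r12^2) ≤ Real.sqrt ((r1+r2)^2) :=
          Real.sqrt_le_sqrt (by nlinarith [sq_nonneg r12])
      _ = r1+r2 := Real.sqrt_sq (by linarith)
  have hN0 : 0 ≤ r1^2+r2^2-2*r12^2 := by nlinarith [sq_nonneg (r1-r2)]
  have hupper : (r1^2+r2^2-2*r12^2)/D ≤ r1+r2 := by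
    rcases eq_or_lt_of_le hD0 with hDz | hDpos
    · rw [← hDz, div_zero]; linarith
    · rw [div_le_iff₀ hDpos]
      nlinarith [hD2, hcs, hDle, hD0]
  have hlower : r1 - 3*r2 ≤ (r1^2+r2^2-2*r12^2)/D := by
    rcases le_or_gt r1 (3*r2) with hcase | hcase
    · have : 0 ≤ (r1^2+r2^2-2*r12^2)/D := div_nonneg hN0 hD0
      linarith
    · have hDpos : 0 < D := by
        have hge : r1 - r2 ≤ D := by
          have h5 : (r1-r2)^2 ≤ (r1+r2)^2 - 4*r12^2 := by nlinarith
          calc r1 - r2 = Real.sqrt ((r1-r2)^2) := (Real.sqrt_sq (by linarith)).symm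
            _ ≤ D := Real.sqrt_le_sqrt h5
        linarith
      rw [le_div_iff₀ hDpos]
      have h3 : (r1-3*r2)*D ≤ (r1-3*r2)*(r1+r2) :=
        mul_le_mul_of_nonneg_left hDle (by linarith)
      nlinarith [hcs]
  rw [abs_le]
  constructor
  · nlinarith [hlower]
  · nlinarith [hupper]

end sandwich

noncomputable def IG (n m : ℕ) (s : ℝ) : ℝ :=
  (1/s) * ((r1P n m s ^ 2 + r2P n m s ^ 2 - 2 * r12P n m s ^ 2) /
    (denP n m s ^ 2 * Real.sqrt ((r1P n m s + r2P n m s) ^ 2 - 4 * r12P n m s ^ 2)))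

noncomputable def errP (n m : ℕ) (y : ℝ) : ℝ :=
  2/y * ((2 * r12P n m (y^2) + 4 * r2P n m (y^2)) / denP n m (y^2) ^ 2)

section pointwise
variable (n m : ℕ) {y : ℝ}

lemma uP_eq (s : ℝ) : uP n m s = r1P n m s + r2P n m s - 2 * r12P n m s := by
  rw [uP, r1P, r2P, r12P, numP]
  ring

lemma diff_le_errP (hy : 0 < y) :
    |2*(y * IG n m (y^2)) - gd n m y| ≤ errP n m y := by
  have hs : (0:ℝ) ≤ y^2 := sq_nonneg y
  have key := sandwich_abs (r1P n m (y^2)) (r2P n m (y^2)) (r12P n m (y^2))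
    (r1P_nonneg n m hs) (r2P_nonneg n m hs) (r12P_nonneg n m hs) (sq_r12P_le n m hs)
  rw [← uP_eq] at key
  have hden : (0:ℝ) < denP n m (y^2) ^ 2 := pow_pos (denP_pos n m hs) 2
  set N := r1P n m (y^2) ^ 2 + r2P n m (y^2) ^ 2 - 2 * r12P n m (y^2) ^ 2 with hN
  set D := Real.sqrt ((r1P n m (y^2) + r2P n m (y^2)) ^ 2 - 4 * r12P n m (y^2) ^ 2) with hDD
  have e0 : 2*(y * IG n m (y^2)) - gd n m y = 2/y * ((N/D - uP n m (y^2)) / denP n m (y^2)^2) := by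
    rw [IG, gd, ← hN, ← hDD]
    have hy2 : y^2 ≠ 0 := by positivity
    have hdne : denP n m (y^2)^2 ≠ 0 := ne_of_gt hden
    rcases eq_or_ne D 0 with hD0 | hD0
    · rw [hD0]
      field_simp
    · field_simp
  rw [e0, errP]
  rw [abs_mul, abs_div, abs_div, abs_of_pos hy, abs_of_pos hden]
  have h2 : |(2:ℝ)| = 2 := by norm_num
  rw [h2]
  gcongr

end pointwise

section errbounds
variable (n m : ℕ) {s y : ℝ}

lemma aP_le_denP (hs : 0 ≤ s) : aP n s ≤ denP n m s := by
  rw [denP]; linarith [aP_nonneg m hs]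

lemma errP_nonneg (hy : 0 < y) : 0 ≤ errP n m y := by
  have hs : (0:ℝ) ≤ y^2 := sq_nonneg y
  have h12 := r12P_nonneg n m hs
  have h2 := r2P_nonneg n m hs
  have hd := denP_pos n m hs
  rw [errP]
  positivity

lemma errP_le_small (hy0 : 0 < y) (hy1 : y ≤ 1) : errP n m y ≤ 12*((m:ℝ)+1)^3 := by
  have hs : (0:ℝ) ≤ y^2 := sq_nonneg y
  have hs1 : y^2 ≤ 1 := by nlinarith
  have hden1 : 1 ≤ denP n m (y^2) := one_le_denP n m hs
  have hdpos : 0 < denP n m (y^2) := denP_pos n m hs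
  have hd2 : (1:ℝ) ≤ denP n m (y^2)^2 := one_le_pow₀ hden1
  have hβ := bP_le_of_le_one m hs hs1
  have hγ := cP_le_of_le_one m hs hs1
  have hβ0 := bP_nonneg m hs
  have hγ0 := cP_nonneg m hs
  have hBden : bP n (y^2) ≤ denP n m (y^2)^2 := by
    calc bP n (y^2) ≤ aP n (y^2)^2 := bP_le_sq_aP n hs
      _ ≤ denP n m (y^2)^2 := by
          have := aP_le_denP n m hs
          have := aP_nonneg n hs
          nlinarith
  have hX : 2 * r12P n m (y^2) + 4 * r2P n m (y^2)
      ≤ denP n m (y^2)^2 * ((2*((m:ℝ)+1)^2 + 4*((m:ℝ)+1)^3) * y^2) := by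
    have h12 : r12P n m (y^2) ≤ denP n m (y^2)^2 * (((m:ℝ)+1)^2 * y^2) := by
      rw [r12P]
      calc bP n (y^2) * bP m (y^2) ≤ denP n m (y^2)^2 * bP m (y^2) :=
            mul_le_mul_of_nonneg_right hBden hβ0
        _ ≤ denP n m (y^2)^2 * (((m:ℝ)+1)^2 * y^2) := by
            apply mul_le_mul_of_nonneg_left _ (by positivity)
            exact_mod_cast hβ
    have h2' : r2P n m (y^2) ≤ denP n m (y^2)^2 * (((m:ℝ)+1)^3 * y^2) := by
      rw [r2P]
      have hc : cP m (y^2) ≤ ((m:ℝ)+1)^3 * y^2 := by exact_mod_cast hγ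
      have h1 : denP n m (y^2) * cP m (y^2) ≤ denP n m (y^2)^2 * (((m:ℝ)+1)^3 * y^2) := by
        calc denP n m (y^2) * cP m (y^2) ≤ denP n m (y^2) * (((m:ℝ)+1)^3 * y^2) :=
              mul_le_mul_of_nonneg_left hc (le_of_lt hdpos)
          _ ≤ denP n m (y^2)^2 * (((m:ℝ)+1)^3 * y^2) := by
              apply mul_le_mul_of_nonneg_right _ (by positivity)
              nlinarith
      nlinarith [sq_nonneg (bP m (y^2))]
    linarith
  have hXden : (2 * r12P n m (y^2) + 4 * r2P n m (y^2)) / denP n m (y^2)^2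
      ≤ (2*((m:ℝ)+1)^2 + 4*((m:ℝ)+1)^3) * y^2 := by
    rw [div_le_iff₀ (by positivity)]
    calc 2 * r12P n m (y^2) + 4 * r2P n m (y^2)
        ≤ denP n m (y^2)^2 * ((2*((m:ℝ)+1)^2 + 4*((m:ℝ)+1)^3) * y^2) := hX
      _ = (2*((m:ℝ)+1)^2 + 4*((m:ℝ)+1)^3) * y^2 * denP n m (y^2)^2 := by ring
  calc errP n m y ≤ 2/y * ((2*((m:ℝ)+1)^2 + 4*((m:ℝ)+1)^3) * y^2) := by
        rw [errP]
        exact mul_le_mul_of_nonneg_left hXden (by positivity)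
    _ = (2*(2*((m:ℝ)+1)^2 + 4*((m:ℝ)+1)^3)) * y := by
        field_simp
    _ ≤ 12*((m:ℝ)+1)^3 := by
        have hm : (1:ℝ) ≤ (m:ℝ)+1 := by linarith [Nat.cast_nonneg (α := ℝ) m]
        nlinarith [hm, hy0, hy1]

lemma errP_le_large (hmn : m < n) (hy : 1 ≤ y) :
    errP n m y ≤ (12*(n:ℝ)*((m:ℝ)+1)^3) * (y^(2*(n-m)+1))⁻¹ := by
  have hy0 : (0:ℝ) < y := lt_of_lt_of_le one_pos hy
  have hs : (0:ℝ) ≤ y^2 := sq_nonneg y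
  have hs1 : (1:ℝ) ≤ y^2 := one_le_pow₀ hy
  have hdpos : 0 < denP n m (y^2) := denP_pos n m hs
  have hm1n : ((m:ℝ)+1) ≤ n := by exact_mod_cast hmn
  have hβ := bP_le_of_one_le m hs1
  have hγ := cP_le_of_one_le m hs1
  have hB : bP n (y^2) ≤ (n:ℝ) * denP n m (y^2) := by
    calc bP n (y^2) ≤ (n:ℝ) * aP n (y^2) := bP_le_aP_mul n hs
      _ ≤ (n:ℝ) * denP n m (y^2) :=
          mul_le_mul_of_nonneg_left (aP_le_denP n m hs) (Nat.cast_nonneg n)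
  have hX : 2 * r12P n m (y^2) + 4 * r2P n m (y^2)
      ≤ denP n m (y^2) * ((6*(n:ℝ)*((m:ℝ)+1)^3) * (y^2)^m) := by
    have hβ' : bP m (y^2) ≤ ((m:ℝ)+1)^2 * (y^2)^m := by exact_mod_cast hβ
    have hγ' : cP m (y^2) ≤ ((m:ℝ)+1)^3 * (y^2)^m := by exact_mod_cast hγ
    have h12 : r12P n m (y^2) ≤ (n:ℝ) * denP n m (y^2) * (((m:ℝ)+1)^2 * (y^2)^m) := by
      rw [r12P]
      exact mul_le_mul hB hβ' (bP_nonneg m hs) (by positivity)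
    have h2' : r2P n m (y^2) ≤ denP n m (y^2) * (((m:ℝ)+1)^3 * (y^2)^m) := by
      rw [r2P]
      have := mul_le_mul_of_nonneg_left hγ' (le_of_lt hdpos)
      nlinarith [sq_nonneg (bP m (y^2))]
    have hmono : ((m:ℝ)+1)^2 ≤ ((m:ℝ)+1)^3 := by
      have hm : (1:ℝ) ≤ (m:ℝ)+1 := by linarith [Nat.cast_nonneg (α := ℝ) m]
      nlinarith
    have hp : (0:ℝ) ≤ (y^2)^m := by positivity
    have hn1 : (1:ℝ) ≤ (n:ℝ) := by
      have : (0:ℝ) ≤ (m:ℝ) := Nat.cast_nonneg m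
      linarith
    have e1 : (n:ℝ) * denP n m (y^2) * (((m:ℝ)+1)^2 * (y^2)^m)
        ≤ (n:ℝ) * denP n m (y^2) * (((m:ℝ)+1)^3 * (y^2)^m) := by
      apply mul_le_mul_of_nonneg_left (mul_le_mul_of_nonneg_right hmono hp)
      exact mul_nonneg (by linarith) hdpos.le
    have e2 : denP n m (y^2) * (((m:ℝ)+1)^3 * (y^2)^m)
        ≤ (n:ℝ) * (denP n m (y^2) * (((m:ℝ)+1)^3 * (y^2)^m)) := by
      apply le_mul_of_one_le_left _ hn1
      positivity
    nlinarith [h12, h2', e1, e2]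
  have hdenpow : (y^2)^n ≤ denP n m (y^2) := le_trans (pow_le_aP n hs) (aP_le_denP n m hs)
  have hXden : (2 * r12P n m (y^2) + 4 * r2P n m (y^2)) / denP n m (y^2)^2
      ≤ (6*(n:ℝ)*((m:ℝ)+1)^3) * (y^2)^m / (y^2)^n := by
    have hpn : (0:ℝ) < (y^2)^n := by positivity
    rw [div_le_div_iff₀ (by positivity) hpn]
    calc (2 * r12P n m (y^2) + 4 * r2P n m (y^2)) * (y^2)^n
        ≤ (denP n m (y^2) * ((6*(n:ℝ)*((m:ℝ)+1)^3) * (y^2)^m)) * denP n m (y^2) := by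
          apply mul_le_mul hX hdenpow hpn.le
          positivity
      _ = (6*(n:ℝ)*((m:ℝ)+1)^3) * (y^2)^m * denP n m (y^2)^2 := by ring
  have hfinal : (2:ℝ)/y * ((6*(n:ℝ)*((m:ℝ)+1)^3) * (y^2)^m / (y^2)^n)
      = (12*(n:ℝ)*((m:ℝ)+1)^3) * (y^(2*(n-m)+1))⁻¹ := by
    have hsplit : (y^2)^n = (y^2)^m * y^(2*(n-m)) := by
      rw [← pow_mul, ← pow_mul, ← pow_add]
      congr 1
      omega
    rw [hsplit]
    have h1 : y ≠ 0 := ne_of_gt hy0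
    have h2 : (y^2)^m ≠ 0 := by positivity
    have h3 : y^(2*(n-m)) ≠ 0 := by positivity
    rw [pow_succ]
    field_simp
    ring
  calc errP n m y ≤ 2/y * ((6*(n:ℝ)*((m:ℝ)+1)^3) * (y^2)^m / (y^2)^n) := by
        rw [errP]
        exact mul_le_mul_of_nonneg_left hXden (by positivity)
    _ = (12*(n:ℝ)*((m:ℝ)+1)^3) * (y^(2*(n-m)+1))⁻¹ := hfinal

end errbounds

section assembly
variable (n m : ℕ)

lemma expectedZeros_eq_radial :
    expectedZeros n m = ∫ y in Set.Ioi (0:ℝ), 2*(y * IG n m (y^2)) := by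
  have h0 : expectedZeros n m = (1/π) * ∫ z : ℂ, (fun y : ℝ => IG n m (y^2)) ‖z‖ := rfl
  rw [h0, integral_fun_norm_addHaar (volume : Measure ℂ) (fun y : ℝ => IG n m (y^2))]
  have hdim : Module.finrank ℝ ℂ = 2 := Complex.finrank_real_complex
  rw [hdim]
  have hball : (volume : Measure ℂ).real (Metric.ball 0 1) = π := by
    rw [measureReal_def, Complex.volume_ball]
    simp [ENNReal.ofReal_one]
  rw [hball]
  simp only [smul_eq_mul, nsmul_eq_mul, Nat.cast_ofNat]
  norm_num
  rw [MeasureTheory.integral_const_mul]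
  have hπ : (π:ℝ) ≠ 0 := Real.pi_ne_zero
  field_simp
end assembly

section assembly2
variable (n m : ℕ)

lemma continuous_r1P : Continuous (r1P n m) := by
  unfold r1P denP
  exact (((continuous_aP n).add (continuous_aP m)).mul (continuous_cP n)).sub
    ((continuous_bP n).pow 2)

lemma continuous_r2P : Continuous (r2P n m) := by
  unfold r2P denP
  exact (((continuous_aP n).add (continuous_aP m)).mul (continuous_cP m)).sub
    ((continuous_bP m).pow 2)

lemma continuous_r12P : Continuous (r12P n m) := by
  unfold r12P
  exact (continuous_bP n).mul (continuous_bP m)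

lemma continuous_denP : Continuous (denP n m) := by
  unfold denP
  exact (continuous_aP n).add (continuous_aP m)

lemma measurable_IG : Measurable (IG n m) := by
  unfold IG
  apply Measurable.mul
  · exact measurable_const.div measurable_id
  · apply Measurable.div
    · exact ((((continuous_r1P n m).pow 2).add ((continuous_r2P n m).pow 2)).sub
        (continuous_const.mul ((continuous_r12P n m).pow 2))).measurable
    · exact (((continuous_denP n m).pow 2).mul (Real.continuous_sqrt.comp
        ((((continuous_r1P n m).add (continuous_r2P n m)).pow 2).sub
          (continuous_const.mul ((continuous_r12P n m).pow 2))))).measurable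

lemma measurable_H : Measurable (fun y : ℝ => 2*(y * IG n m (y^2))) := by
  apply Measurable.const_mul
  exact measurable_id.mul ((measurable_IG n m).comp ((continuous_pow 2).measurable))

lemma measurable_gd : Measurable (gd n m) := by
  unfold gd
  apply Measurable.mul
  · exact measurable_const.div measurable_id
  · apply Measurable.div
    · have : Continuous (uP n m) := by
        unfold uP numP
        exact ((continuous_denP n m).mul ((continuous_cP n).add (continuous_cP m))).sub
          (((continuous_bP n).add (continuous_bP m)).pow 2)
      exact (this.comp (continuous_pow 2)).measurable
    · exact (((continuous_denP n m).comp (continuous_pow 2)).pow 2).measurable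

noncomputable def domF (n m : ℕ) (y : ℝ) : ℝ :=
  if y ≤ 1 then 12*((m:ℝ)+1)^3 else (12*(n:ℝ)*((m:ℝ)+1)^3) * (y^(2*(n-m)+1))⁻¹

lemma errP_le_domF (hmn : m < n) {y : ℝ} (hy : 0 < y) : errP n m y ≤ domF n m y := by
  rw [domF]
  split_ifs with h
  · exact errP_le_small n m hy h
  · exact errP_le_large n m hmn (le_of_lt (not_le.1 h))

lemma rpow_eq_on_Ioi_one (hmn : m < n) : ∀ y ∈ Set.Ioi (1:ℝ),
    (12*(n:ℝ)*((m:ℝ)+1)^3) * y ^ (-((2*(n-m)+1 : ℕ) : ℝ)) = domF n m y := by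
  intro y hy
  have hy1 : (1:ℝ) < y := hy
  have hy0 : (0:ℝ) < y := lt_trans one_pos hy1
  rw [domF, if_neg (not_le.2 hy1)]
  congr 1
  rw [Real.rpow_neg hy0.le, Real.rpow_natCast]

lemma integrableOn_domF (hmn : m < n) : IntegrableOn (domF n m) (Set.Ioi (0:ℝ)) := by
  have hsplit : Set.Ioi (0:ℝ) = Set.Ioc 0 1 ∪ Set.Ioi 1 :=
    (Set.Ioc_union_Ioi_eq_Ioi zero_le_one).symm
  rw [hsplit]
  apply IntegrableOn.union
  · refine IntegrableOn.congr_fun (f := fun _ => 12*((m:ℝ)+1)^3) ?_ ?_ measurableSet_Ioc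
    · exact integrableOn_const measure_Ioc_lt_top.ne
    · intro y hy
      simp only
      rw [domF, if_pos hy.2]
  · have hk : (-((2*(n-m)+1 : ℕ) : ℝ)) < -1 := by
      have : (1:ℝ) ≤ ((2*(n-m)+1 : ℕ) : ℝ) := by exact_mod_cast Nat.one_le_iff_ne_zero.2 (by omega)
      have h2 : (2:ℝ) ≤ ((2*(n-m)+1 : ℕ) : ℝ) := by
        have : (2:ℕ) ≤ 2*(n-m)+1 := by omega
        exact_mod_cast this
      linarith
    have base := (integrableOn_Ioi_rpow_of_lt hk one_pos).const_mul (12*(n:ℝ)*((m:ℝ)+1)^3)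
    exact IntegrableOn.congr_fun base (fun y hy => rpow_eq_on_Ioi_one n m hmn y hy)
      measurableSet_Ioi

lemma integral_domF_le (hm2 : 2*m+2 ≤ n) :
    ∫ y in Set.Ioi (0:ℝ), domF n m y ≤ 24*((m:ℝ)+1)^3 := by
  have hmn : m < n := by omega
  have hsplit : Set.Ioi (0:ℝ) = Set.Ioc 0 1 ∪ Set.Ioi 1 :=
    (Set.Ioc_union_Ioi_eq_Ioi zero_le_one).symm
  have hint := integrableOn_domF n m hmn
  have hint1 : IntegrableOn (domF n m) (Set.Ioc (0:ℝ) 1) :=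
    hint.mono_set (by rw [hsplit]; exact Set.subset_union_left)
  have hint2 : IntegrableOn (domF n m) (Set.Ioi (1:ℝ)) :=
    hint.mono_set (by rw [hsplit]; exact Set.subset_union_right)
  rw [hsplit, setIntegral_union (Set.Ioc_disjoint_Ioi le_rfl) measurableSet_Ioi hint1 hint2]
  have hpiece1 : ∫ y in Set.Ioc (0:ℝ) 1, domF n m y = 12*((m:ℝ)+1)^3 := by
    rw [setIntegral_congr_fun measurableSet_Ioc
      (fun y (hy : y ∈ Set.Ioc (0:ℝ) 1) => by rw [domF, if_pos hy.2])]
    simp [Real.volume_Ioc]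
  have hpiece2 : ∫ y in Set.Ioi (1:ℝ), domF n m y ≤ 12*((m:ℝ)+1)^3 := by
    have hk : (-((2*(n-m)+1 : ℕ) : ℝ)) < -1 := by
      have h2 : (2:ℝ) ≤ ((2*(n-m)+1 : ℕ) : ℝ) := by
        have : (2:ℕ) ≤ 2*(n-m)+1 := by omega
        exact_mod_cast this
      linarith
    have heq : ∫ y in Set.Ioi (1:ℝ), domF n m y
        = ∫ y in Set.Ioi (1:ℝ), (12*(n:ℝ)*((m:ℝ)+1)^3) * y ^ (-((2*(n-m)+1 : ℕ) : ℝ)) :=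
      (setIntegral_congr_fun measurableSet_Ioi (fun y hy => rpow_eq_on_Ioi_one n m hmn y hy)).symm
    rw [heq, MeasureTheory.integral_const_mul, integral_Ioi_rpow_of_lt hk one_pos]
    have hval : -(1:ℝ) ^ ((-((2*(n-m)+1 : ℕ) : ℝ)) + 1) / ((-((2*(n-m)+1 : ℕ) : ℝ)) + 1)
        = 1 / (2*((n:ℝ)-(m:ℝ))) := by
      rw [Real.one_rpow]
      have hcast : ((2*(n-m)+1 : ℕ) : ℝ) = 2*((n:ℝ)-(m:ℝ)) + 1 := by
        have : (n-m : ℕ) = (n:ℝ) - (m:ℝ) := by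
          rw [Nat.cast_sub (le_of_lt hmn)]
        push_cast [Nat.cast_sub (le_of_lt hmn)]
        ring
      rw [hcast]
      have : 2*((n:ℝ)-(m:ℝ)) > 0 := by
        have : (m:ℝ) < n := by exact_mod_cast hmn
        linarith
      rw [show -(2*((n:ℝ)-(m:ℝ)) + 1) + 1 = -(2*((n:ℝ)-(m:ℝ))) by ring, neg_div_neg_eq]
    rw [hval]
    rw [mul_one_div, div_le_iff₀ (by
      have : (m:ℝ) < n := by exact_mod_cast hmn
      linarith)]
    have hnn : (n:ℝ) ≤ 2*((n:ℝ)-(m:ℝ)) := by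
      have h1 : (2*m+2 : ℝ) ≤ (n:ℝ) := by exact_mod_cast hm2
      have h2 : (0:ℝ) ≤ (m:ℝ) := Nat.cast_nonneg m
      linarith
    have hc : (0:ℝ) ≤ 12*((m:ℝ)+1)^3 := by positivity
    nlinarith
  linarith [hpiece1, hpiece2]

end assembly2

lemma abs_expectedZeros_sub (n m : ℕ) (hm2 : 2*m+2 ≤ n) :
    |expectedZeros n m - n| ≤ 24*((m:ℝ)+1)^3 := by
  have hmn : m < n := by omega
  rw [expectedZeros_eq_radial]
  have hgd_int := integrableOn_gd n m hmn
  have hdom_int := integrableOn_domF n m hmn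
  have hbound : ∀ᵐ y ∂(volume.restrict (Set.Ioi (0:ℝ))),
      ‖2*(y * IG n m (y^2)) - gd n m y‖ ≤ domF n m y := by
    filter_upwards [ae_restrict_mem measurableSet_Ioi] with y hy
    rw [Real.norm_eq_abs]
    exact le_trans (diff_le_errP n m hy) (errP_le_domF n m hmn hy)
  have hdiff_meas : AEStronglyMeasurable (fun y => 2*(y * IG n m (y^2)) - gd n m y)
      (volume.restrict (Set.Ioi (0:ℝ))) :=
    ((measurable_H n m).sub (measurable_gd n m)).aestronglyMeasurable
  have hdiff_int : IntegrableOn (fun y => 2*(y * IG n m (y^2)) - gd n m y) (Set.Ioi (0:ℝ)) :=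
    Integrable.mono' hdom_int hdiff_meas hbound
  have hH_int : IntegrableOn (fun y => 2*(y * IG n m (y^2))) (Set.Ioi (0:ℝ)) := by
    have h := hdiff_int.add hgd_int
    have heq : ((fun y => 2*(y * IG n m (y^2)) - gd n m y) + gd n m)
        = fun y => 2*(y * IG n m (y^2)) := by funext y; simp
    rwa [heq] at h
  have hsub : (∫ y in Set.Ioi (0:ℝ), 2*(y * IG n m (y^2))) - (n:ℝ)
      = ∫ y in Set.Ioi (0:ℝ), (2*(y * IG n m (y^2)) - gd n m y) := by
    rw [integral_sub hH_int hgd_int, integral_gd n m hmn]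
  rw [hsub]
  calc |∫ y in Set.Ioi (0:ℝ), (2*(y * IG n m (y^2)) - gd n m y)|
      ≤ ∫ y in Set.Ioi (0:ℝ), |2*(y * IG n m (y^2)) - gd n m y| := by
        simpa [Real.norm_eq_abs] using
          norm_integral_le_integral_norm (μ := volume.restrict (Set.Ioi (0:ℝ)))
            (fun y => 2*(y * IG n m (y^2)) - gd n m y)
    _ ≤ ∫ y in Set.Ioi (0:ℝ), domF n m y := by
        refine integral_mono_ae hdiff_int.abs hdom_int ?_
        filter_upwards [hbound] with y hy
        rwa [Real.norm_eq_abs] at hy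
    _ ≤ 24*((m:ℝ)+1)^3 := integral_domF_le n m hm2


/-- For fixed `m`, the expected number of zeros is asymptotically `n`. -/
theorem expectedZeros_asymptotic_fixed_m (m : ℕ) :
    Tendsto (fun n : ℕ => expectedZeros n m / n) atTop (nhds 1) := by
  set K : ℝ := 24*((m:ℝ)+1)^3 with hK
  have hK0 : 0 ≤ K := by positivity
  have hKtend : Tendsto (fun n : ℕ => K / n) atTop (𝓝 0) :=
    tendsto_const_div_atTop_nhds_zero_nat K
  have hlow : Tendsto (fun n : ℕ => 1 - K / n) atTop (𝓝 1) := by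
    simpa using (tendsto_const_nhds (x := (1:ℝ))).sub hKtend
  have hupp : Tendsto (fun n : ℕ => 1 + K / n) atTop (𝓝 1) := by
    simpa using (tendsto_const_nhds (x := (1:ℝ))).add hKtend
  refine tendsto_of_tendsto_of_tendsto_of_le_of_le' hlow hupp ?_ ?_
  · filter_upwards [eventually_ge_atTop (2*m+2)] with n hn
    have h := abs_expectedZeros_sub n m hn
    have hn0 : (0:ℝ) < n := by
      have : (1:ℕ) ≤ n := by omega
      exact_mod_cast this
    rw [abs_le] at h
    have h1 : (n:ℝ) - K ≤ expectedZeros n m := by linarith [h.1]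
    calc 1 - K/n = ((n:ℝ) - K)/n := by field_simp
      _ ≤ expectedZeros n m / n := (div_le_div_iff_of_pos_right hn0).2 h1
  · filter_upwards [eventually_ge_atTop (2*m+2)] with n hn
    have h := abs_expectedZeros_sub n m hn
    have hn0 : (0:ℝ) < n := by
      have : (1:ℕ) ≤ n := by omega
      exact_mod_cast this
    rw [abs_le] at h
    have h1 : expectedZeros n m ≤ (n:ℝ) + K := by linarith [h.2]
    calc expectedZeros n m / n ≤ ((n:ℝ) + K)/n := (div_le_div_iff_of_pos_right hn0).2 h1
      _ = 1 + K/n := by field_simp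
end basic
end

section
/- Let x be a positive real number and for a natural number k set α_k = Σ_{j=0}^k x^j, β_k = Σ_{j=1}^k j x^j, γ_k = Σ_{j=1}^k j² x^j. Then for all natural numbers n, m ≥ 1, (α_n + α_m) γ_n γ_m ≥ γ_n β_m² + γ_m β_n². -/
open Finset

theorem power_sum_ineq (x : ℝ) (hx : 0 < x) (n m : ℕ) (hn : 1 ≤ n) (hm : 1 ≤ m)
    (α β γ : ℕ → ℝ)
    (hα : ∀ k, α k = ∑ j ∈ range (k + 1), x ^ j)
    (hβ : ∀ k, β k = ∑ j ∈ range (k + 1), (j : ℝ) * x ^ j)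
    (hγ : ∀ k, γ k = ∑ j ∈ range (k + 1), (j : ℝ) ^ 2 * x ^ j) :
    γ n * (β m) ^ 2 + γ m * (β n) ^ 2 ≤ (α n + α m) * γ n * γ m := by
  have cs : ∀ k, (β k) ^ 2 ≤ α k * γ k := by
    intro k
    rw [hα, hβ, hγ]
    exact sum_sq_le_sum_mul_sum_of_sq_eq_mul _
      (fun i _ => by positivity) (fun i _ => by positivity)
      (fun i _ => by ring)
  have hγpos : ∀ k, 0 ≤ γ k := fun k => by
    rw [hγ]; exact sum_nonneg fun i _ => by positivity
  calc γ n * (β m) ^ 2 + γ m * (β n) ^ 2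
      ≤ γ n * (α m * γ m) + γ m * (α n * γ n) := by
        gcongr <;> first | exact hγpos _ | exact cs _
    _ = (α n + α m) * γ n * γ m := by ring
end

section
/- For every fixed real number t ≠ 0, lim_{n→∞} (1/(n²(n+t))) · Σ_{j=1}^n j² (1 + t/n)^j = ((t² − 2t + 2) e^t − 2)/t³. -/
open Finset Filter Real

lemma sum_sq_geom (x : ℝ) (hx : x ≠ 1) (n : ℕ) :
    ∑ j ∈ range (n + 1), (j : ℝ) ^ 2 * x ^ j =
      (x ^ (n + 1) * (((n : ℝ) + 1) ^ 2 - (2 * (n : ℝ) ^ 2 + 2 * n - 1) * x + (n : ℝ) ^ 2 * x ^ 2)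
        - x * (1 + x)) / (x - 1) ^ 3 := by
  have hx' : x - 1 ≠ 0 := sub_ne_zero.mpr hx
  induction n with
  | zero => simp
  | succ n ih =>
      rw [Finset.sum_range_succ, ih]
      push_cast
      field_simp
      ring

/-- For fixed `t ≠ 0`,
`lim_{n→∞} (1/(n²(n+t))) ∑_{j=1}^n j² (1 + t/n)^j = ((t² − 2t + 2)eᵗ − 2)/t³`. -/
theorem limit_c (t : ℝ) (ht : t ≠ 0) :
    Tendsto (fun n : ℕ =>
        (1 / ((n : ℝ) ^ 2 * ((n : ℝ) + t))) *
          ∑ j ∈ range (n + 1), (j : ℝ) ^ 2 * (1 + t / n) ^ j)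
      atTop (nhds (((t ^ 2 - 2 * t + 2) * Real.exp t - 2) / t ^ 3)) := by
  have h0 : Tendsto (fun n : ℕ => t / (n : ℝ)) atTop (nhds 0) :=
    tendsto_const_div_atTop_nhds_zero_nat t
  have hpow : Tendsto (fun n : ℕ => (1 + t / (n : ℝ)) ^ (n + 1)) atTop (nhds (Real.exp t)) := by
    have := (Real.tendsto_one_add_div_pow_exp t).mul (h0.const_add 1)
    simpa [pow_succ, mul_one] using this
  -- the auxiliary function
  have hmain : Tendsto (fun n : ℕ =>
      ((1 + t / n) ^ (n + 1) * (t ^ 2 - 2 * t + 2 + t / n) - (1 + t / n) * (2 + t / n))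
        / ((1 + t / n) * t ^ 3))
      atTop (nhds (((t ^ 2 - 2 * t + 2) * Real.exp t - 2) / t ^ 3)) := by
    have hnum : Tendsto (fun n : ℕ =>
        (1 + t / n) ^ (n + 1) * (t ^ 2 - 2 * t + 2 + t / n) - (1 + t / n) * (2 + t / n))
        atTop (nhds (Real.exp t * (t ^ 2 - 2 * t + 2 + 0) - (1 + 0) * (2 + 0))) :=
      (hpow.mul (h0.const_add (t ^ 2 - 2 * t + 2))).sub
        ((h0.const_add 1).mul (h0.const_add 2))
    have hden : Tendsto (fun n : ℕ => (1 + t / n) * t ^ 3) atTop (nhds ((1 + 0) * t ^ 3)) :=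
      (h0.const_add 1).mul tendsto_const_nhds
    have := hnum.div hden (by simp [pow_ne_zero, ht])
    convert this using 2
    · rfl
    · ring
  refine hmain.congr' ?_
  filter_upwards [eventually_gt_atTop (⌈|t|⌉₊)] with n hn
  have hnt : (0 : ℝ) < (n : ℝ) + t := by
    have h1 : |t| ≤ (⌈|t|⌉₊ : ℝ) := Nat.le_ceil _
    have h2 : ((⌈|t|⌉₊ : ℝ)) < n := by exact_mod_cast hn
    have := neg_abs_le t
    linarith
  have hn0 : (0 : ℝ) < (n : ℝ) := by
    have h1 : (0 : ℝ) ≤ (⌈|t|⌉₊ : ℝ) := by positivity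
    have h2 : ((⌈|t|⌉₊ : ℝ)) < n := by exact_mod_cast hn
    linarith
  have hne : (n : ℝ) ≠ 0 := ne_of_gt hn0
  have hx : 1 + t / (n : ℝ) ≠ 1 := by
    simp [div_ne_zero ht hne]
  have hx0 : 1 + t / (n : ℝ) ≠ 0 := by
    have : (1 : ℝ) + t / n = ((n : ℝ) + t) / n := by field_simp
    rw [this]
    exact ne_of_gt (div_pos hnt hn0)
  rw [sum_sq_geom _ hx n]
  have key : (1 : ℝ) + t / n - 1 = t / n := by ring
  rw [key]
  field_simp
  ring
end

section
/- The function f : ℝ \ {0} → ℝ given by f(t) = (e^{2t} − (t² + 2) e^t + 1)/(t² (e^t − 1)²) is integrable over ℝ and ∫_{-∞}^{∞} f(t) dt = 1. -/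
open MeasureTheory Real Set Filter

noncomputable def limitG : ℝ → ℝ := fun t => if t = 0 then 1/2 else Real.exp t / (Real.exp t - 1) - t⁻¹

lemma exp_sub_one_ne {t : ℝ} (ht : t ≠ 0) : Real.exp t - 1 ≠ 0 := by
  rw [sub_ne_zero]
  intro h
  exact ht (Real.exp_injective (by rw [h, Real.exp_zero]))

lemma limitG_eq {t : ℝ} (ht : t ≠ 0) :
    limitG t = Real.exp t / (Real.exp t - 1) - t⁻¹ := if_neg ht

lemma limitG_hasDeriv {t : ℝ} (ht : t ≠ 0) :
    HasDerivAt limitG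
      ((Real.exp (2 * t) - (t ^ 2 + 2) * Real.exp t + 1) /
          (t ^ 2 * (Real.exp t - 1) ^ 2)) t := by
  have hne := exp_sub_one_ne ht
  have h1 : HasDerivAt (fun t : ℝ => Real.exp t / (Real.exp t - 1))
      ((Real.exp t * (Real.exp t - 1) - Real.exp t * Real.exp t) / (Real.exp t - 1) ^ 2) t :=
    (Real.hasDerivAt_exp t).div ((Real.hasDerivAt_exp t).sub_const 1) hne
  have h2 : HasDerivAt (fun t : ℝ => Real.exp t / (Real.exp t - 1) - t⁻¹)
      ((Real.exp t * (Real.exp t - 1) - Real.exp t * Real.exp t) / (Real.exp t - 1) ^ 2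
        - (-(t ^ 2)⁻¹)) t := h1.sub (hasDerivAt_inv ht)
  have heq : ((Real.exp t * (Real.exp t - 1) - Real.exp t * Real.exp t) / (Real.exp t - 1) ^ 2
        - (-(t ^ 2)⁻¹))
      = (Real.exp (2 * t) - (t ^ 2 + 2) * Real.exp t + 1) /
          (t ^ 2 * (Real.exp t - 1) ^ 2) := by
    rw [two_mul, Real.exp_add]
    field_simp
    ring
  rw [heq] at h2
  apply h2.congr_of_eventuallyEq
  filter_upwards [compl_singleton_mem_nhds ht] with x hx
  exact limitG_eq hx

lemma limitG_tendsto_ne :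
    Tendsto limitG (nhdsWithin 0 {(0:ℝ)}ᶜ) (nhds (1/2 : ℝ)) := by
  have key : Tendsto (fun t : ℝ => (t * Real.exp t - Real.exp t + 1) / (t * Real.exp t - t))
      (nhdsWithin 0 {(0:ℝ)}ᶜ) (nhds (1/2 : ℝ)) := by
    have key2 : Tendsto (fun t : ℝ => (t * Real.exp t) / (Real.exp t + t * Real.exp t - 1))
        (nhdsWithin 0 {(0:ℝ)}ᶜ) (nhds (1/2 : ℝ)) := by
      apply HasDerivAt.lhopital_zero_nhds (f' := fun t => Real.exp t + t * Real.exp t)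
        (g' := fun t => 2 * Real.exp t + t * Real.exp t)
      · filter_upwards with x
        simpa [Pi.mul_def] using (hasDerivAt_id x).mul (Real.hasDerivAt_exp x)
      · filter_upwards with x
        have h := ((Real.hasDerivAt_exp x).add
          ((hasDerivAt_id x).mul (Real.hasDerivAt_exp x))).sub_const 1
        simp only [id_eq, Pi.mul_def, Pi.add_def, Pi.sub_def] at h
        refine h.congr_deriv ?_
        ring
      · filter_upwards [Ioo_mem_nhds (show (-1:ℝ) < 0 by norm_num) (show (0:ℝ) < 1 by norm_num)]
          with x hx
        have h1 : (0:ℝ) < Real.exp x := Real.exp_pos x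
        have h2 : (0:ℝ) < 2 + x := by linarith [hx.1]
        have : 2 * Real.exp x + x * Real.exp x = (2 + x) * Real.exp x := by ring
        rw [this]
        positivity
      · have : Tendsto (fun t : ℝ => t * Real.exp t) (nhds 0) (nhds (0 * Real.exp 0)) :=
          (continuous_id.mul Real.continuous_exp).tendsto 0
        simpa using this
      · have : Tendsto (fun t : ℝ => Real.exp t + t * Real.exp t - 1) (nhds 0)
            (nhds (Real.exp 0 + 0 * Real.exp 0 - 1)) :=
          ((Real.continuous_exp.add (continuous_id.mul Real.continuous_exp)).sub
            continuous_const).tendsto 0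
        simpa using this
      · have : Tendsto (fun t : ℝ => (Real.exp t + t * Real.exp t) / (2 * Real.exp t + t * Real.exp t))
            (nhds 0) (nhds ((Real.exp 0 + 0 * Real.exp 0) / (2 * Real.exp 0 + 0 * Real.exp 0))) := by
          apply Tendsto.div
          · exact (Real.continuous_exp.add (continuous_id.mul Real.continuous_exp)).tendsto 0
          · exact ((continuous_const.mul Real.continuous_exp).add
              (continuous_id.mul Real.continuous_exp)).tendsto 0
          · simp
        simp only [Real.exp_zero] at this
        norm_num at this
        exact this
    apply HasDerivAt.lhopital_zero_nhdsNE (f' := fun t => t * Real.exp t)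
      (g' := fun t => Real.exp t + t * Real.exp t - 1)
    · filter_upwards with x
      have h := (((hasDerivAt_id x).mul (Real.hasDerivAt_exp x)).sub
        (Real.hasDerivAt_exp x)).add_const 1
      simp only [id_eq, Pi.mul_def, Pi.add_def, Pi.sub_def] at h
      refine h.congr_deriv ?_
      ring
    · filter_upwards with x
      have h := ((hasDerivAt_id x).mul (Real.hasDerivAt_exp x)).sub (hasDerivAt_id x)
      simp only [id_eq, Pi.mul_def, Pi.add_def, Pi.sub_def] at h
      refine h.congr_deriv ?_
      ring
    · rw [eventually_nhdsWithin_iff]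
      filter_upwards with x hx
      rcases lt_or_gt_of_ne (show x ≠ 0 from hx) with h | h
      · have h1 : Real.exp x - 1 < 0 := by
          have := Real.exp_lt_one_iff.mpr h  -- check name
          linarith
        have h2 : x * Real.exp x < 0 := mul_neg_of_neg_of_pos h (Real.exp_pos x)
        intro hc
        nlinarith
      · have h1 : (0:ℝ) < Real.exp x - 1 := by
          nlinarith [Real.add_one_lt_exp (ne_of_gt h)]
        have h2 : (0:ℝ) < x * Real.exp x := mul_pos h (Real.exp_pos x)
        intro hc
        nlinarith
    · apply tendsto_nhdsWithin_of_tendsto_nhds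
      have : Tendsto (fun t : ℝ => t * Real.exp t - Real.exp t + 1) (nhds 0)
          (nhds (0 * Real.exp 0 - Real.exp 0 + 1)) :=
        (((continuous_id.mul Real.continuous_exp).sub Real.continuous_exp).add
          continuous_const).tendsto 0
      simpa using this
    · apply tendsto_nhdsWithin_of_tendsto_nhds
      have : Tendsto (fun t : ℝ => t * Real.exp t - t) (nhds 0)
          (nhds (0 * Real.exp 0 - 0)) :=
        ((continuous_id.mul Real.continuous_exp).sub continuous_id).tendsto 0
      simpa using this
    · exact key2
  apply key.congr'
  rw [eventuallyEq_iff_exists_mem]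
  refine ⟨{(0:ℝ)}ᶜ, self_mem_nhdsWithin, fun x hx => ?_⟩
  have hx0 : x ≠ 0 := hx
  have hne := exp_sub_one_ne hx0
  rw [limitG_eq hx0]
  show (x * Real.exp x - Real.exp x + 1) / (x * Real.exp x - x) = _
  have hden : x * Real.exp x - x ≠ 0 := by
    have h : x * Real.exp x - x = x * (Real.exp x - 1) := by ring
    rw [h]
    exact mul_ne_zero hx0 hne
  rw [div_eq_iff hden]
  field_simp
  ring

lemma limitG_continuousAt : ContinuousAt limitG 0 := by
  have h0 : limitG 0 = 1/2 := if_pos rfl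
  rw [ContinuousAt, h0, ← nhdsNE_sup_pure (0:ℝ), tendsto_sup]
  refine ⟨limitG_tendsto_ne, ?_⟩
  have := tendsto_pure_nhds limitG 0
  rwa [h0] at this

lemma sinh_sq_aux (x : ℝ) :
    (Real.exp (2*x) - 1)^2 = 4 * Real.exp (2*x) * Real.sinh x ^ 2 := by
  rw [Real.sinh_eq, Real.exp_neg, two_mul, Real.exp_add]
  have h := Real.exp_ne_zero x
  field_simp
  ring

lemma limit_density_nonneg (t : ℝ) :
    0 ≤ (Real.exp (2 * t) - (t ^ 2 + 2) * Real.exp t + 1) /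
        (t ^ 2 * (Real.exp t - 1) ^ 2) := by
  apply div_nonneg _ (by positivity)
  have key : (Real.exp t - 1)^2 = 4 * Real.exp t * Real.sinh (t/2)^2 := by
    have h := sinh_sq_aux (t/2)
    rwa [show 2*(t/2) = t by ring] at h
  have habs : |t/2| ≤ |Real.sinh (t/2)| := by
    rcases le_or_gt 0 (t/2) with h | h
    · have hs := Real.self_le_sinh_iff.mpr h
      rw [abs_of_nonneg h, abs_of_nonneg (h.trans hs)]
      exact hs
    · have h2 : (0:ℝ) ≤ -(t/2) := by linarith
      have hs := Real.self_le_sinh_iff.mpr h2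
      rw [Real.sinh_neg] at hs
      rw [abs_of_neg h, abs_of_neg (by linarith : Real.sinh (t/2) < 0)]
      linarith
  have h3 : (t/2)^2 ≤ Real.sinh (t/2)^2 := by
    rw [← sq_abs (t/2), ← sq_abs (Real.sinh (t/2))]
    exact pow_le_pow_left₀ (abs_nonneg _) habs 2
  have hnum : Real.exp (2 * t) - (t ^ 2 + 2) * Real.exp t + 1
      = (Real.exp t - 1)^2 - t^2 * Real.exp t := by
    rw [two_mul, Real.exp_add]; ring
  rw [hnum, key]
  nlinarith [Real.exp_pos t, h3]

lemma limitG_atTop : Tendsto limitG atTop (nhds 1) := by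
  have h1 : Tendsto (fun t : ℝ => Real.exp t - 1) atTop atTop := by
    have := tendsto_atTop_add_const_right atTop (-1 : ℝ) Real.tendsto_exp_atTop
    simpa [sub_eq_add_neg] using this
  have h2 : Tendsto (fun t : ℝ => 1 + (Real.exp t - 1)⁻¹ - t⁻¹) atTop (nhds (1 + 0 - 0)) :=
    (tendsto_const_nhds.add h1.inv_tendsto_atTop).sub tendsto_inv_atTop_zero
  norm_num at h2
  apply h2.congr'
  filter_upwards [eventually_ge_atTop (1:ℝ)] with x hx
  have hx0 : x ≠ 0 := by linarith
  have hne := exp_sub_one_ne hx0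
  rw [limitG_eq hx0]
  field_simp
  ring

lemma tendsto_inv_atBot_zero' : Tendsto (fun t : ℝ => t⁻¹) atBot (nhds 0) := by
  have h0 : Tendsto (fun t : ℝ => (-t)⁻¹) atBot (nhds 0) :=
    tendsto_inv_atTop_zero.comp tendsto_neg_atBot_atTop
  have h := h0.neg
  simp only [Function.comp_def, inv_neg, neg_neg, neg_zero] at h
  exact h

lemma limitG_atBot : Tendsto limitG atBot (nhds 0) := by
  have h1 : Tendsto (fun t : ℝ => Real.exp t / (Real.exp t - 1)) atBot (nhds (0 / (0 - 1))) :=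
    Real.tendsto_exp_atBot.div (Real.tendsto_exp_atBot.sub tendsto_const_nhds) (by norm_num)
  have h2 : Tendsto (fun t : ℝ => Real.exp t / (Real.exp t - 1) - t⁻¹) atBot (nhds (0 / (0-1) - 0)) :=
    h1.sub tendsto_inv_atBot_zero'
  norm_num at h2
  apply h2.congr'
  filter_upwards [eventually_le_atBot (-1:ℝ)] with x hx
  have hx0 : x ≠ 0 := by linarith
  rw [limitG_eq hx0]

lemma limit_density_even (t : ℝ) :
    (Real.exp (2 * -t) - ((-t) ^ 2 + 2) * Real.exp (-t) + 1) /
        ((-t) ^ 2 * (Real.exp (-t) - 1) ^ 2)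
    = (Real.exp (2 * t) - (t ^ 2 + 2) * Real.exp t + 1) /
        (t ^ 2 * (Real.exp t - 1) ^ 2) := by
  rcases eq_or_ne t 0 with rfl | ht
  · norm_num
  have hne := exp_sub_one_ne ht
  have hE := Real.exp_ne_zero t
  have hne' : Real.exp (-t) - 1 ≠ 0 := exp_sub_one_ne (neg_ne_zero.mpr ht)
  rw [show (2 : ℝ) * -t = -(2*t) by ring, Real.exp_neg, Real.exp_neg,
    show (2 : ℝ) * t = t + t by ring, Real.exp_add]
  have hne'' : (Real.exp t)⁻¹ - 1 ≠ 0 := by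
    rw [← Real.exp_neg]; exact hne'
  have hB : (-t) ^ 2 * ((Real.exp t)⁻¹ - 1) ^ 2 ≠ 0 := by
    apply mul_ne_zero (pow_ne_zero _ (neg_ne_zero.mpr ht)) (pow_ne_zero _ hne'')
  have hD : t ^ 2 * (Real.exp t - 1) ^ 2 ≠ 0 :=
    mul_ne_zero (pow_ne_zero _ ht) (pow_ne_zero _ hne)
  rw [div_eq_div_iff hB hD]
  field_simp
  ring

/-- The pointwise limit of the first-intensity density in the fixed-`m` case:
`f(t) = (e^{2t} − (t² + 2)eᵗ + 1)/(t²(eᵗ − 1)²)` (for `t ≠ 0`)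
is integrable over `ℝ` and has total integral `1`. -/
theorem limit_density_integral :
    Integrable (fun t : ℝ =>
        (Real.exp (2 * t) - (t ^ 2 + 2) * Real.exp t + 1) /
          (t ^ 2 * (Real.exp t - 1) ^ 2)) ∧
    (∫ t : ℝ, (Real.exp (2 * t) - (t ^ 2 + 2) * Real.exp t + 1) /
        (t ^ 2 * (Real.exp t - 1) ^ 2)) = 1 := by
  set f : ℝ → ℝ := fun t =>
      (Real.exp (2 * t) - (t ^ 2 + 2) * Real.exp t + 1) /
        (t ^ 2 * (Real.exp t - 1) ^ 2) with hf
  have hderivIoi : ∀ x ∈ Ioi (0:ℝ), HasDerivAt limitG (f x) x :=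
    fun x hx => limitG_hasDeriv (ne_of_gt hx)
  have hderivIio : ∀ x ∈ Iio (0:ℝ), HasDerivAt limitG (f x) x :=
    fun x hx => limitG_hasDeriv (ne_of_lt hx)
  have hcontIci : ContinuousWithinAt limitG (Ici (0:ℝ)) 0 :=
    limitG_continuousAt.continuousWithinAt
  have hcontIic : ContinuousWithinAt limitG (Iic (0:ℝ)) 0 :=
    limitG_continuousAt.continuousWithinAt
  have hIntIoi : IntegrableOn f (Ioi 0) :=
    integrableOn_Ioi_deriv_of_nonneg hcontIci hderivIoi
      (fun x _ => limit_density_nonneg x) limitG_atTop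
  have hIntIic : IntegrableOn f (Iic 0) := by
    rw [← Measure.map_neg_eq_self (volume : Measure ℝ)]
    have m : MeasurableEmbedding fun x : ℝ => -x :=
      (Homeomorph.neg ℝ).measurableEmbedding
    rw [m.integrableOn_map_iff]
    simp only [Function.comp_def, hf]
    simp only [limit_density_even]
    rw [show (fun x : ℝ => -x) ⁻¹' Iic 0 = Ici 0 by
      rw [neg_preimage, neg_Iic, neg_zero]]
    exact Iff.mpr integrableOn_Ici_iff_integrableOn_Ioi hIntIoi
  have hInt : Integrable f := by
    rw [← integrableOn_univ, ← Iic_union_Ioi (a := (0:ℝ))]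
    exact hIntIic.union hIntIoi
  refine ⟨hInt, ?_⟩
  have hIoi : ∫ x in Ioi (0:ℝ), f x = 1 - limitG 0 :=
    integral_Ioi_of_hasDerivAt_of_nonneg hcontIci hderivIoi
      (fun x _ => limit_density_nonneg x) limitG_atTop
  have hIic : ∫ x in Iic (0:ℝ), f x = limitG 0 - 0 :=
    integral_Iic_of_hasDerivAt_of_tendsto hcontIic hderivIio hIntIic limitG_atBot
  have hsplit : ∫ t, f t = (∫ t in Iic (0:ℝ), f t) + ∫ t in Ioi (0:ℝ), f t := by
    rw [← setIntegral_union (Iic_disjoint_Ioi le_rfl) measurableSet_Ioi hIntIic hIntIoi,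
      Iic_union_Ioi, Measure.restrict_univ]
  rw [hsplit, hIic, hIoi, show limitG 0 = 1/2 from if_pos rfl]
  norm_num
end
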